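/- Fix x₀ ∈ ℝ^N. Suppose there is a > 0 with ‖L* x‖₂² ≥ a ‖x‖₂² for all x ∈ ℝ^N (so L* is the analysis operator of a frame with lower frame bound a), and let L̃ : ℝ^P → ℝ^N be a linear map with L̃ ∘ L* = Id on ℝ^N (a dual frame synthesis operator). Suppose the norm A is decomposable at L* x₀ with data (T₀, e₀); set S₀ := T₀⊥, and assume Φ is injective on the image of L̃ ∘ P_{T₀}. Then there exist constants C₁ > 0 and C₂' > 0, independent of η, α, ε, c, and w, such that for every ε > 0, c > 0, w ∈ ℝ^M with ‖w‖₂ ≤ ε, setting y := Φ x₀ + w and λ := c ε, for every pair (η, α) for which the source condition SC(x₀) holds with A*(P_{S₀} α) < 1, every minimizer x⋆ of problem (P) satisfies ‖x⋆ − x₀‖₂ ≤ [ C₁ (2 + c‖η‖₂) + C₂' (1 + c‖η‖₂/2)² / (c (1 − A*(P_{S₀} α))) ] ε. -/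

import Mathlib

open RealInnerProductSpace

noncomputable section

abbrev Euc (n : ℕ) := EuclideanSpace ℝ (Fin n)

def proj {n : ℕ} (V : Submodule ℝ (Euc n)) : Euc n →L[ℝ] Euc n :=
  V.subtypeL.comp (Submodule.orthogonalProjectionOnto V)

def dualNorm {n : ℕ} (A : Euc n → ℝ) (α : Euc n) : ℝ :=
  sSup {r : ℝ | ∃ v : Euc n, A v ≤ 1 ∧ r = ⟪α, v⟫}

def subdiff {n : ℕ} (f : Euc n → ℝ) (x : Euc n) : Set (Euc n) :=
  {g : Euc n | ∀ y : Euc n, f x + ⟪g, y - x⟫ ≤ f y}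

def IsNorm {n : ℕ} (A : Euc n → ℝ) : Prop :=
  (∀ x, A x = 0 ↔ x = 0) ∧ (∀ (c : ℝ) (x : Euc n), A (c • x) = |c| * A x) ∧
    (∀ x y, A (x + y) ≤ A x + A y)

def Decomposable {n : ℕ} (A : Euc n → ℝ) (u : Euc n) (T : Submodule ℝ (Euc n)) (e : Euc n) :
    Prop :=
  e ∈ T ∧
  subdiff A u = {α : Euc n | proj T α = e ∧ dualNorm A (proj Tᗮ α) ≤ 1} ∧
  ∀ z : Euc n, z ∈ Tᗮ →
    A z = sSup {r : ℝ | ∃ v ∈ (Tᗮ : Submodule ℝ (Euc n)), dualNorm A v ≤ 1 ∧ r = ⟪v, z⟫}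

def obj {N M P : ℕ} (Φ : Euc N →L[ℝ] Euc M) (L : Euc P →L[ℝ] Euc N) (A : Euc P → ℝ)
    (y : Euc M) (lam : ℝ) (x : Euc N) : ℝ :=
  (1/2) * ‖y - Φ x‖^2 + lam * A (ContinuousLinearMap.adjoint L x)

def SC {N M P : ℕ} (Φ : Euc N →L[ℝ] Euc M) (L : Euc P →L[ℝ] Euc N) (A : Euc P → ℝ)
    (x : Euc N) (η : Euc M) (α : Euc P) : Prop :=
  α ∈ subdiff A (ContinuousLinearMap.adjoint L x) ∧
  ContinuousLinearMap.adjoint Φ η = L α ∧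
  L α ∈ subdiff (fun z => A (ContinuousLinearMap.adjoint L z)) x

def breg {n : ℕ} (A : Euc n → ℝ) (α u u₀ : Euc n) : ℝ :=
  A u - A u₀ - ⟪α, u - u₀⟫



lemma IsNorm.zero' {n : ℕ} {A : Euc n → ℝ} (hA : IsNorm A) : A 0 = 0 :=
  (hA.1 0).mpr rfl

lemma IsNorm.nonneg {n : ℕ} {A : Euc n → ℝ} (hA : IsNorm A) (x : Euc n) : 0 ≤ A x := by
  have h := hA.2.2 x (-x)
  have h2 : A (-x) = A x := by
    have := hA.2.1 (-1) x; simpa using this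
  simp [hA.zero'] at *
  nlinarith [h, h2]

lemma IsNorm.neg {n : ℕ} {A : Euc n → ℝ} (hA : IsNorm A) (x : Euc n) : A (-x) = A x := by
  have := hA.2.1 (-1) x; simpa using this

lemma IsNorm.upper {n : ℕ} {A : Euc n → ℝ} (hA : IsNorm A) :
    ∃ K : ℝ, 0 ≤ K ∧ ∀ x : Euc n, A x ≤ K * ‖x‖ := by
  classical
  refine ⟨∑ i : Fin n, A (EuclideanSpace.single i 1), Finset.sum_nonneg fun i _ => hA.nonneg _, ?_⟩
  intro x
  have hx : ∑ i : Fin n, x i • EuclideanSpace.single i (1:ℝ) = x := by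
    have := (EuclideanSpace.basisFun (Fin n) ℝ).sum_repr x
    simpa [EuclideanSpace.basisFun_apply, EuclideanSpace.basisFun_repr] using this
  calc A x = A (∑ i : Fin n, x i • EuclideanSpace.single i (1:ℝ)) := by rw [hx]
    _ ≤ ∑ i : Fin n, A (x i • EuclideanSpace.single i (1:ℝ)) := by
        refine Finset.le_sum_of_subadditive A ?_ ?_ _ _
        · exact hA.zero'.le
        · exact hA.2.2
    _ ≤ ∑ i : Fin n, ‖x‖ * A (EuclideanSpace.single i 1) := by
        refine Finset.sum_le_sum fun i _ => ?_
        rw [hA.2.1]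
        have hxi : |x i| ≤ ‖x‖ := by
          have h1 : ⟪EuclideanSpace.single i (1:ℝ), x⟫ = x i := by
            simp [EuclideanSpace.inner_single_left]
          have h2 := abs_real_inner_le_norm (EuclideanSpace.single i (1:ℝ)) x
          rw [h1, EuclideanSpace.norm_single] at h2
          simpa using h2
        exact mul_le_mul_of_nonneg_right hxi (hA.nonneg _)
    _ = (∑ i : Fin n, A (EuclideanSpace.single i 1)) * ‖x‖ := by
        rw [Finset.sum_mul]; congr 1; ext i; ring

lemma IsNorm.continuous {n : ℕ} {A : Euc n → ℝ} (hA : IsNorm A) : Continuous A := by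
  obtain ⟨K, hK0, hK⟩ := hA.upper
  have : LipschitzWith (Real.toNNReal K) A := by
    refine LipschitzWith.of_dist_le_mul fun x y => ?_
    have h1 : A x - A y ≤ A (x - y) := by
      have := hA.2.2 (x - y) y; simpa using this
    have h2 : A y - A x ≤ A (x - y) := by
      have := hA.2.2 (y - x) x
      have hn : A (y - x) = A (x - y) := by
        have := hA.neg (x - y); simpa using this
      simp at this; nlinarith
    have h3 : A (x - y) ≤ K * ‖x - y‖ := hK _
    rw [Real.dist_eq, dist_eq_norm]
    rw [abs_le]
    constructor
    · simp only [Real.coe_toNNReal K hK0]; nlinarith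
    · simp only [Real.coe_toNNReal K hK0]; nlinarith
  exact this.continuous

lemma IsNorm.lower {n : ℕ} {A : Euc n → ℝ} (hA : IsNorm A) :
    ∃ C : ℝ, 0 < C ∧ ∀ x : Euc n, ‖x‖ ≤ C * A x := by
  by_cases hns : ∃ x : Euc n, x ≠ 0
  · obtain ⟨x₁, hx₁⟩ := hns
    have hS : (Metric.sphere (0 : Euc n) 1).Nonempty := by
      refine ⟨‖x₁‖⁻¹ • x₁, ?_⟩
      simp [norm_smul, inv_mul_cancel₀ (norm_ne_zero_iff.mpr hx₁)]
    obtain ⟨v₀, hv₀S, hmin⟩ := (isCompact_sphere (0 : Euc n) 1).exists_isMinOn hS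
      hA.continuous.continuousOn
    have hv₀ : v₀ ≠ 0 := by
      intro h
      rw [mem_sphere_zero_iff_norm] at hv₀S
      simp [h] at hv₀S
    have hm : 0 < A v₀ := lt_of_le_of_ne (hA.nonneg _) (fun h => hv₀ ((hA.1 v₀).mp h.symm))
    refine ⟨(A v₀)⁻¹, inv_pos.mpr hm, fun x => ?_⟩
    rcases eq_or_ne x 0 with rfl | hx
    · simp [hA.zero']
    · have hxn : (0:ℝ) < ‖x‖ := norm_pos_iff.mpr hx
      have hmem : ‖x‖⁻¹ • x ∈ Metric.sphere (0 : Euc n) 1 := by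
        simp [norm_smul, inv_mul_cancel₀ (ne_of_gt hxn)]
      have := hmin hmem
      have hAx : A (‖x‖⁻¹ • x) = ‖x‖⁻¹ * A x := by
        rw [hA.2.1]; congr 1; rw [abs_of_pos (inv_pos.mpr hxn)]
      simp only [IsMinOn, IsMinFilter] at this
      have h2 : A v₀ ≤ ‖x‖⁻¹ * A x := by rw [← hAx]; exact this
      have h3 := mul_le_mul_of_nonneg_left h2 (le_of_lt hxn)
      rw [← mul_assoc, mul_inv_cancel₀ (ne_of_gt hxn), one_mul] at h3
      calc ‖x‖ ≤ (A v₀)⁻¹ * (‖x‖ * A v₀) := by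
            rw [mul_comm ‖x‖, ← mul_assoc, inv_mul_cancel₀ (ne_of_gt hm), one_mul]
        _ ≤ (A v₀)⁻¹ * A x := by
            apply mul_le_mul_of_nonneg_left _ (le_of_lt (inv_pos.mpr hm))
            nlinarith [h3]
  · push_neg at hns
    refine ⟨1, one_pos, fun x => ?_⟩
    rw [hns x]; simp [hA.zero']

lemma dual_bddAbove {n : ℕ} {A : Euc n → ℝ} (hA : IsNorm A) (β : Euc n) :
    BddAbove {r : ℝ | ∃ v : Euc n, A v ≤ 1 ∧ r = ⟪β, v⟫} := by
  obtain ⟨C, hC0, hC⟩ := hA.lower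
  refine ⟨‖β‖ * C, fun r hr => ?_⟩
  obtain ⟨v, hv, rfl⟩ := hr
  calc ⟪β, v⟫ ≤ ‖β‖ * ‖v‖ := real_inner_le_norm _ _
    _ ≤ ‖β‖ * (C * A v) := by
        exact mul_le_mul_of_nonneg_left (hC v) (norm_nonneg _)
    _ ≤ ‖β‖ * (C * 1) := by
        have := mul_le_mul_of_nonneg_left hv (le_of_lt hC0)
        exact mul_le_mul_of_nonneg_left this (norm_nonneg _)
    _ = ‖β‖ * C := by ring

lemma dualNorm_zero {n : ℕ} {A : Euc n → ℝ} (hA : IsNorm A) : dualNorm A (0 : Euc n) = 0 := by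
  have hset : {r : ℝ | ∃ v : Euc n, A v ≤ 1 ∧ r = ⟪(0 : Euc n), v⟫} = {0} := by
    ext r
    constructor
    · rintro ⟨v, _, rfl⟩; simp
    · rintro rfl; exact ⟨0, by simp [hA.zero'], by simp⟩
  rw [dualNorm, hset, csSup_singleton]

lemma dualNorm_nonneg {n : ℕ} {A : Euc n → ℝ} (hA : IsNorm A) (β : Euc n) :
    0 ≤ dualNorm A β := by
  have h0 : (0:ℝ) ∈ {r : ℝ | ∃ v : Euc n, A v ≤ 1 ∧ r = ⟪β, v⟫} :=
    ⟨0, by simp [hA.zero'], by simp⟩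
  exact le_csSup (dual_bddAbove hA β) h0

lemma inner_le_dualNorm {n : ℕ} {A : Euc n → ℝ} (hA : IsNorm A) (β z : Euc n) :
    ⟪β, z⟫ ≤ dualNorm A β * A z := by
  rcases eq_or_ne z 0 with rfl | hz
  · simp [hA.zero']
  · have hAz : 0 < A z := lt_of_le_of_ne (hA.nonneg z) (fun h => hz ((hA.1 z).mp h.symm))
    set v : Euc n := (A z)⁻¹ • z with hv
    have hAv : A v = 1 := by
      rw [hv, hA.2.1, abs_of_pos (inv_pos.mpr hAz), inv_mul_cancel₀ (ne_of_gt hAz)]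
    have hmem : ⟪β, v⟫ ∈ {r : ℝ | ∃ u : Euc n, A u ≤ 1 ∧ r = ⟪β, u⟫} := ⟨v, le_of_eq hAv, rfl⟩
    have h1 : ⟪β, v⟫ ≤ dualNorm A β := le_csSup (dual_bddAbove hA β) hmem
    have h2 : ⟪β, v⟫ = (A z)⁻¹ * ⟪β, z⟫ := real_inner_smul_right _ _ _
    rw [h2] at h1
    have := mul_le_mul_of_nonneg_right h1 (le_of_lt hAz)
    calc ⟪β, z⟫ = (A z)⁻¹ * ⟪β, z⟫ * A z := by field_simp
      _ ≤ dualNorm A β * A z := this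

lemma antilip {n m : ℕ} (f : Euc n →L[ℝ] Euc m) (V : Submodule ℝ (Euc n))
    (h : ∀ v ∈ V, f v = 0 → v = 0) : ∃ c : ℝ, 0 < c ∧ ∀ v ∈ V, ‖v‖ ≤ c * ‖f v‖ := by
  by_cases hns : ∃ v : V, v ≠ 0
  · obtain ⟨v₁, hv₁⟩ := hns
    have hS : (Metric.sphere (0 : V) 1).Nonempty := by
      refine ⟨‖v₁‖⁻¹ • v₁, ?_⟩
      have : ‖v₁‖ ≠ 0 := norm_ne_zero_iff.mpr hv₁
      have h1 : ‖(‖v₁‖⁻¹ • v₁ : V)‖ = 1 := by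
        rw [norm_smul, norm_inv, norm_norm, inv_mul_cancel₀ this]
      simpa [mem_sphere_zero_iff_norm] using h1
    have hcont : Continuous fun v : V => ‖f v‖ :=
      (f.continuous.comp continuous_subtype_val).norm
    obtain ⟨v₀, hv₀S, hmin⟩ := (isCompact_sphere (0 : V) 1).exists_isMinOn hS
      hcont.continuousOn
    have hv₀ : (v₀ : Euc n) ≠ 0 := by
      intro h0
      rw [mem_sphere_zero_iff_norm] at hv₀S
      rw [show v₀ = 0 from Subtype.ext h0] at hv₀S
      simp at hv₀S
    have hm : 0 < ‖f v₀‖ := by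
      rw [norm_pos_iff]
      exact fun h0 => hv₀ (h v₀ v₀.2 h0)
    refine ⟨‖f v₀‖⁻¹, inv_pos.mpr hm, fun v hv => ?_⟩
    rcases eq_or_ne v 0 with rfl | hvne
    · simp
    · have hvn : (0:ℝ) < ‖v‖ := norm_pos_iff.mpr hvne
      have hmem : (‖v‖⁻¹ • (⟨v, hv⟩ : V)) ∈ Metric.sphere (0 : V) 1 := by
        have hnv : ‖(⟨v, hv⟩ : V)‖ = ‖v‖ := rfl
        simp [norm_smul, hnv, inv_mul_cancel₀ (ne_of_gt hvn)]
      have h1 := hmin hmem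
      simp only [IsMinOn, IsMinFilter, Set.mem_setOf_eq] at h1
      have h2 : ‖f (‖v‖⁻¹ • v)‖ = ‖v‖⁻¹ * ‖f v‖ := by
        rw [map_smul, norm_smul, norm_inv, norm_norm]
      have h3 : ‖f v₀‖ ≤ ‖v‖⁻¹ * ‖f v‖ := by
        simpa [norm_smul] using h1
      have h4 := mul_le_mul_of_nonneg_left h3 (le_of_lt hvn)
      rw [← mul_assoc, mul_inv_cancel₀ (ne_of_gt hvn), one_mul] at h4
      calc ‖v‖ ≤ ‖f v₀‖⁻¹ * (‖v‖ * ‖f v₀‖) := by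
            rw [mul_comm ‖v‖, ← mul_assoc, inv_mul_cancel₀ (ne_of_gt hm), one_mul]
        _ ≤ ‖f v₀‖⁻¹ * ‖f v‖ := mul_le_mul_of_nonneg_left h4 (le_of_lt (inv_pos.mpr hm))
  · push_neg at hns
    refine ⟨1, one_pos, fun v hv => ?_⟩
    have : (⟨v, hv⟩ : V) = 0 := hns _
    have hv0 : v = 0 := congrArg Subtype.val this
    simp [hv0]

lemma proj_mem {n : ℕ} (V : Submodule ℝ (Euc n)) (x : Euc n) : proj V x ∈ V :=
  (Submodule.orthogonalProjectionOnto V x).2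

lemma proj_eq_self {n : ℕ} {V : Submodule ℝ (Euc n)} {x : Euc n} (h : x ∈ V) :
    proj V x = x := Submodule.starProjection_eq_self_iff.mpr h

lemma proj_eq_zero {n : ℕ} {V : Submodule ℝ (Euc n)} {x : Euc n} (h : x ∈ Vᗮ) :
    proj V x = 0 := by
  have := Submodule.orthogonalProjectionOnto_apply_of_mem_orthogonal h
  simp [proj, this]

lemma proj_orth_zero {n : ℕ} {V : Submodule ℝ (Euc n)} {x : Euc n} (h : x ∈ V) :
    proj Vᗮ x = 0 := proj_eq_zero (V.le_orthogonal_orthogonal h)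

lemma proj_add_proj {n : ℕ} (V : Submodule ℝ (Euc n)) (x : Euc n) :
    proj V x + proj Vᗮ x = x := by
  have := Submodule.starProjection_orthogonal_val (K := V) x
  change V.starProjection x + Vᗮ.starProjection x = x
  rw [this]; abel

lemma inner_eq_inner_proj {n : ℕ} (V : Submodule ℝ (Euc n)) {v : Euc n} (hv : v ∈ V)
    (x : Euc n) : ⟪v, x⟫ = ⟪v, proj V x⟫ := by
  have hmem : x - proj V x ∈ Vᗮ := Submodule.sub_starProjection_mem_orthogonal (K := V) x
  have h0 : ⟪v, x - proj V x⟫ = 0 := (Submodule.mem_orthogonal V _).mp hmem v hv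
  rw [inner_sub_right] at h0
  linarith

lemma arithA {r ε lam E DB ip : ℝ} (hr0 : 0 ≤ r) (hε : 0 < ε) (hlam0 : 0 < lam)
    (hE0 : 0 ≤ E) (hDB0 : 0 ≤ DB) (hiplb : -(E * r) - E * ε ≤ ip)
    (hkey : (1/2) * r ^ 2 + lam * DB + lam * ip ≤ (1/2) * ε ^ 2) :
    r ≤ ε + 2 * lam * E ∧ DB * (2 * lam) ≤ (ε + lam * E) ^ 2 := by
  have h10 : lam * (-(E * r) - E * ε) ≤ lam * ip :=
    mul_le_mul_of_nonneg_left hiplb (le_of_lt hlam0)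
  have hkey2 : (1/2) * r ^ 2 + lam * DB - lam * E * r ≤ (1/2) * ε ^ 2 + lam * E * ε := by
    nlinarith [hkey, h10]
  constructor
  · have hq : (1/2) * r ^ 2 - lam * E * r ≤ (1/2) * ε ^ 2 + lam * E * ε := by
      nlinarith [hkey2, mul_nonneg (le_of_lt hlam0) hDB0]
    nlinarith [hq, hr0, hε]
  · nlinarith [hkey2, sq_nonneg (r - lam * E)]

lemma arithB {cF p t ε : ℝ} (hcF : 0 < cF) (hε : 0 < ε) (ht : 0 ≤ t)
    (hp : p ≤ 2 * ε + 2 * t * ε) : cF * p ≤ (2 * cF) * (2 + t) * ε := by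
  nlinarith [mul_le_mul_of_nonneg_left hp (le_of_lt hcF), mul_pos hcF hε]

lemma arithF {x y CA : ℝ} (hx : 0 ≤ x) (hy : 0 ≤ y) (hCA : 0 ≤ CA) :
    2 * (x * y * CA) ≤ 2 * x * (y + 1) * CA := by nlinarith [mul_nonneg hx hCA]

lemma arithC {KK C2 Az cc ε s E DB : ℝ} (hKK0 : 0 ≤ KK) (hKKle : 2 * KK ≤ C2)
    (hε : 0 < ε) (hc : 0 < cc) (hs : 0 < s) (hE0 : 0 ≤ E)
    (hsAz : s * Az ≤ DB) (hDBb : DB * (2 * (cc * ε)) ≤ (ε + cc * ε * E) ^ 2) :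
    KK * Az ≤ C2 * (1 + cc * E / 2) ^ 2 / (cc * s) * ε := by
  rw [div_mul_eq_mul_div, le_div_iff₀ (mul_pos hc hs)]
  have e1 : Az * (2 * cc * ε * s) ≤ (ε + cc * ε * E) ^ 2 := by
    nlinarith [mul_le_mul_of_nonneg_right hsAz
      (show (0:ℝ) ≤ 2 * cc * ε by positivity), hDBb]
  have e2 : KK * (Az * (2 * cc * ε * s)) ≤ KK * (ε + cc * ε * E) ^ 2 :=
    mul_le_mul_of_nonneg_left e1 hKK0
  have h4 : (ε + cc * ε * E) ^ 2 ≤ 4 * (1 + cc * E / 2) ^ 2 * ε ^ 2 := by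
    nlinarith [mul_nonneg (sq_nonneg ε) (mul_nonneg (le_of_lt hc) hE0), sq_nonneg ε]
  have h5 : KK * (ε + cc * ε * E) ^ 2 ≤ KK * (4 * (1 + cc * E / 2) ^ 2 * ε ^ 2) :=
    mul_le_mul_of_nonneg_left h4 hKK0
  have h6 := mul_le_mul_of_nonneg_right hKKle
    (show (0:ℝ) ≤ 2 * (1 + cc * E / 2) ^ 2 * ε ^ 2 by positivity)
  have e3 : KK * (ε + cc * ε * E) ^ 2 ≤ C2 * (1 + cc * E / 2) ^ 2 * ε * (2 * ε) := by
    nlinarith [h5, h6]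
  nlinarith [e2, e3, hε]

set_option maxHeartbeats 1000000 in
theorem stmt7 {N M P : ℕ} (Φ : Euc N →L[ℝ] Euc M) (L : Euc P →L[ℝ] Euc N)
    (Lt : Euc P →L[ℝ] Euc N)
    (A : Euc P → ℝ) (hA : IsNorm A) (x₀ : Euc N)
    (a : ℝ) (ha : 0 < a)
    (hframe : ∀ x : Euc N, a * ‖x‖ ^ 2 ≤ ‖ContinuousLinearMap.adjoint L x‖ ^ 2)
    (hdual : Lt.comp (ContinuousLinearMap.adjoint L) = ContinuousLinearMap.id ℝ (Euc N))
    (T₀ : Submodule ℝ (Euc P)) (e₀ : Euc P)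
    (hdec : Decomposable A (ContinuousLinearMap.adjoint L x₀) T₀ e₀)
    (hinj : ∀ x : Euc N, (∃ v : Euc P, Lt (proj T₀ v) = x) → Φ x = 0 → x = 0) :
    ∃ C₁ > (0 : ℝ), ∃ C₂ > (0 : ℝ),
      ∀ (ε c : ℝ), 0 < ε → 0 < c → ∀ w : Euc M, ‖w‖ ≤ ε →
      ∀ (η : Euc M) (α : Euc P), SC Φ L A x₀ η α → dualNorm A (proj T₀ᗮ α) < 1 →
      ∀ xs : Euc N,
        (∀ x, obj Φ L A (Φ x₀ + w) (c * ε) xs ≤ obj Φ L A (Φ x₀ + w) (c * ε) x) →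
        ‖xs - x₀‖ ≤ (C₁ * (2 + c * ‖η‖) +
          C₂ * (1 + c * ‖η‖ / 2) ^ 2 / (c * (1 - dualNorm A (proj T₀ᗮ α)))) * ε := by
  classical
  obtain ⟨CA, hCA, hCAle⟩ := hA.lower
  set V : Submodule ℝ (Euc N) :=
    LinearMap.range ((Lt.comp (proj T₀) : Euc P →L[ℝ] Euc N) : Euc P →ₗ[ℝ] Euc N) with hV
  have hinjV : ∀ v ∈ V, Φ v = 0 → v = 0 := by
    intro v hv h0
    obtain ⟨u, hu⟩ := LinearMap.mem_range.mp hv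
    exact hinj v ⟨u, by simpa using hu⟩ h0
  obtain ⟨cF, hcF, hcFle⟩ := antilip Φ V hinjV
  refine ⟨2 * cF, by positivity, 2 * (1 + cF * ‖Φ‖) * (‖Lt‖ + 1) * CA, by positivity, ?_⟩
  intro ε c hε hc w hw η α hSC hτ1 xs hmin
  set τ := dualNorm A (proj T₀ᗮ α) with hτdef
  set s := 1 - τ with hsdef
  have hs : 0 < s := by rw [hsdef]; exact sub_pos.mpr hτ1
  set u₀ := ContinuousLinearMap.adjoint L x₀ with hu₀
  set us := ContinuousLinearMap.adjoint L xs with hus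
  set δ := xs - x₀ with hδdef
  set d := us - u₀ with hddef
  have hd : d = ContinuousLinearMap.adjoint L δ := by
    rw [hddef, hδdef, map_sub]
  set z := proj T₀ᗮ d with hzdef
  set E := ‖η‖ with hE
  have hE0 : 0 ≤ E := norm_nonneg _
  obtain ⟨hα, hΦη, hLα⟩ := hSC
  rw [← hu₀] at hα
  set lam := c * ε with hlam
  have hlam0 : 0 < lam := mul_pos hc hε
  -- decomposition of δ (needs definitional transparency of the `set` variables)
  have hδsplit : δ = Lt (proj T₀ d) + Lt z := by
    have h1 : Lt (ContinuousLinearMap.adjoint L δ) = δ := by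
      have := ContinuousLinearMap.ext_iff.mp hdual δ
      simpa using this
    rw [← h1, ← hd, ← map_add, proj_add_proj T₀ d]
  clear_value τ s u₀ us δ d z E lam
  -- objective inequality
  have hobj := hmin x₀
  have hy0 : Φ x₀ + w - Φ x₀ = w := by abel
  have hyx : Φ x₀ + w - Φ xs = w - Φ δ := by rw [hδdef, map_sub]; abel
  simp only [obj, hy0, hyx, ← hu₀, ← hus] at hobj
  -- inner product identity
  have hip : ⟪α, d⟫ = ⟪η, Φ δ⟫ := by
    rw [hd, ContinuousLinearMap.adjoint_inner_right, ← hΦη,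
      ContinuousLinearMap.adjoint_inner_left]
  set DB := A us - A u₀ - ⟪α, d⟫ with hDBdef
  have hDB0 : 0 ≤ DB := by
    have h1 := hα us
    rw [← hddef] at h1
    simp only [hDBdef]
    linarith
  set r := ‖w - Φ δ‖ with hr
  have hr0 : 0 ≤ r := norm_nonneg _
  -- lower bound on the inner product
  have hiplb : -(E * r) - E * ε ≤ ⟪η, Φ δ⟫ := by
    have c1 : ⟪η, w - Φ δ⟫ ≤ E * r := by
      have := real_inner_le_norm η (w - Φ δ); rw [← hr, ← hE] at this; exact this
    have c2 : -(E * ε) ≤ ⟪η, w⟫ := by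
      have h := real_inner_le_norm η (-w)
      rw [inner_neg_right, norm_neg] at h
      have : ‖η‖ * ‖w‖ ≤ E * ε := by
        rw [← hE]; exact mul_le_mul_of_nonneg_left hw hE0
      linarith
    have c3 : ⟪η, w - Φ δ⟫ = ⟪η, w⟫ - ⟪η, Φ δ⟫ := inner_sub_right _ _ _
    linarith
  have hw2 : ‖w‖ ^ 2 ≤ ε ^ 2 := pow_le_pow_left₀ (norm_nonneg w) hw 2
  have hkey : (1/2) * r ^ 2 + lam * DB + lam * ⟪η, Φ δ⟫ ≤ (1/2) * ε ^ 2 := by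
    have h2 : A us = A u₀ + DB + ⟪η, Φ δ⟫ := by simp only [hDBdef]; rw [hip]; ring
    rw [h2] at hobj
    linarith [hobj, hw2]
  obtain ⟨hrbound, hDBb⟩ := arithA hr0 hε hlam0 hE0 hDB0 hiplb hkey
  -- bound on ‖Φ δ‖
  have hΦδ : ‖Φ δ‖ ≤ 2 * ε + 2 * lam * E := by
    have h1 : ‖Φ δ‖ - ‖w‖ ≤ ‖Φ δ - w‖ := norm_sub_norm_le _ _
    have h2 : ‖Φ δ - w‖ = r := by rw [hr, norm_sub_rev]
    linarith
  -- decomposability: α data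
  have hαset : proj T₀ α = e₀ ∧ dualNorm A (proj T₀ᗮ α) ≤ 1 := by
    have h3 := hdec.2.1 ▸ hα
    exact h3
  -- Bregman controls A z
  have hz_mem : z ∈ T₀ᗮ := by rw [hzdef]; exact proj_mem _ _
  have hAzsup := hdec.2.2 z hz_mem
  have hub : ∀ rr ∈ {r : ℝ | ∃ v ∈ (T₀ᗮ : Submodule ℝ (Euc P)), dualNorm A v ≤ 1 ∧ r = ⟪v, z⟫},
      rr ≤ DB + τ * A z := by
    rintro rr ⟨v, hvS, hvd, rfl⟩
    have hsubmem : e₀ + v ∈ subdiff A u₀ := by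
      rw [hdec.2.1]
      constructor
      · rw [map_add, proj_eq_self hdec.1, proj_eq_zero hvS, add_zero]
      · rw [map_add, proj_orth_zero hdec.1, proj_eq_self hvS, zero_add]
        exact hvd
    have h5 := hsubmem us
    rw [← hddef] at h5
    have h6 : ⟪e₀ + v, d⟫ ≤ DB + ⟪α, d⟫ := by simp only [hDBdef]; linarith
    have hαdecomp : α = e₀ + proj T₀ᗮ α := by
      rw [← hαset.1]; exact (proj_add_proj T₀ α).symm
    have h7 : ⟪v, d⟫ ≤ DB + ⟪proj T₀ᗮ α, d⟫ := by
      have e1 : ⟪e₀ + v, d⟫ = ⟪e₀, d⟫ + ⟪v, d⟫ := inner_add_left _ _ _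
      have e2 : ⟪α, d⟫ = ⟪e₀, d⟫ + ⟪proj T₀ᗮ α, d⟫ := by
        nth_rewrite 1 [hαdecomp]; exact inner_add_left _ _ _
      linarith
    have e3 : ⟪v, d⟫ = ⟪v, z⟫ := by
      rw [hzdef]; exact inner_eq_inner_proj T₀ᗮ hvS d
    have e4 : ⟪proj T₀ᗮ α, d⟫ = ⟪proj T₀ᗮ α, z⟫ := by
      rw [hzdef]; exact inner_eq_inner_proj T₀ᗮ (proj_mem _ _) d
    have e5 : ⟪proj T₀ᗮ α, z⟫ ≤ τ * A z := by
      rw [hτdef]; exact inner_le_dualNorm hA _ _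
    linarith
  have hSne :
      {r : ℝ | ∃ v ∈ (T₀ᗮ : Submodule ℝ (Euc P)), dualNorm A v ≤ 1 ∧ r = ⟪v, z⟫}.Nonempty := by
    refine ⟨0, 0, Submodule.zero_mem _, ?_, by simp⟩
    rw [dualNorm_zero hA]; norm_num
  have hAzle : A z ≤ DB + τ * A z := by
    calc A z = sSup {r : ℝ | ∃ v ∈ (T₀ᗮ : Submodule ℝ (Euc P)), dualNorm A v ≤ 1 ∧ r = ⟪v, z⟫} :=
          hAzsup
      _ ≤ DB + τ * A z := csSup_le hSne hub
  have hsAz : s * A z ≤ DB := by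
    rw [hsdef]; nlinarith [hAzle]
  
  have hAz0 : 0 ≤ A z := hA.nonneg z
  -- assembling
  set KK := (1 + cF * ‖Φ‖) * ‖Lt‖ * CA with hKK
  have hKK0 : 0 ≤ KK := by rw [hKK]; positivity
  clear_value KK
  have hLtz : ‖Lt z‖ ≤ ‖Lt‖ * (CA * A z) := by
    calc ‖Lt z‖ ≤ ‖Lt‖ * ‖z‖ := Lt.le_opNorm z
      _ ≤ ‖Lt‖ * (CA * A z) := mul_le_mul_of_nonneg_left (hCAle z) (norm_nonneg _)
  have hT_mem : Lt (proj T₀ d) ∈ V := LinearMap.mem_range.mpr ⟨d, by simp⟩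
  have hTb : ‖Lt (proj T₀ d)‖ ≤ cF * ‖Φ (Lt (proj T₀ d))‖ := hcFle _ hT_mem
  have hΦT : Φ (Lt (proj T₀ d)) = Φ δ - Φ (Lt z) := by
    rw [hδsplit, map_add]; abel
  have hΦTb : ‖Φ (Lt (proj T₀ d))‖ ≤ ‖Φ δ‖ + ‖Φ‖ * (‖Lt‖ * (CA * A z)) := by
    rw [hΦT]
    calc ‖Φ δ - Φ (Lt z)‖ ≤ ‖Φ δ‖ + ‖Φ (Lt z)‖ := norm_sub_le _ _
      _ ≤ ‖Φ δ‖ + ‖Φ‖ * ‖Lt z‖ := add_le_add_right (Φ.le_opNorm _) _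
      _ ≤ ‖Φ δ‖ + ‖Φ‖ * (‖Lt‖ * (CA * A z)) :=
          add_le_add_right (mul_le_mul_of_nonneg_left hLtz (norm_nonneg _)) _
  have hδb : ‖δ‖ ≤ cF * ‖Φ δ‖ + KK * A z := by
    have h8 : ‖Lt (proj T₀ d)‖ ≤ cF * (‖Φ δ‖ + ‖Φ‖ * (‖Lt‖ * (CA * A z))) :=
      le_trans hTb (mul_le_mul_of_nonneg_left hΦTb (le_of_lt hcF))
    calc ‖δ‖ ≤ ‖Lt (proj T₀ d)‖ + ‖Lt z‖ := by rw [hδsplit]; exact norm_add_le _ _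
      _ ≤ cF * (‖Φ δ‖ + ‖Φ‖ * (‖Lt‖ * (CA * A z))) + ‖Lt‖ * (CA * A z) := add_le_add h8 hLtz
      _ = cF * ‖Φ δ‖ + KK * A z := by rw [hKK]; ring
  -- numeric conclusion
  rw [hlam] at hΦδ hDBb
  have ht : 0 ≤ c * E := mul_nonneg (le_of_lt hc) hE0
  have key1 : cF * ‖Φ δ‖ ≤ (2 * cF) * (2 + c * E) * ε := by
    refine arithB hcF hε ht ?_
    calc ‖Φ δ‖ ≤ 2 * ε + 2 * (c * ε) * E := hΦδ
      _ = 2 * ε + 2 * (c * E) * ε := by ring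
  have hKKle : 2 * KK ≤ 2 * (1 + cF * ‖Φ‖) * (‖Lt‖ + 1) * CA := by
    rw [hKK]
    exact arithF (by positivity) (norm_nonneg _) (le_of_lt hCA)
  have key2 : KK * A z ≤
      (2 * (1 + cF * ‖Φ‖) * (‖Lt‖ + 1) * CA) * (1 + c * E / 2) ^ 2 / (c * s) * ε :=
    arithC hKK0 hKKle hε hc hs hE0 hsAz hDBb
  calc ‖δ‖ ≤ cF * ‖Φ δ‖ + KK * A z := hδb
    _ ≤ (2 * cF) * (2 + c * E) * ε +
        (2 * (1 + cF * ‖Φ‖) * (‖Lt‖ + 1) * CA) * (1 + c * E / 2) ^ 2 / (c * s) * ε :=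
      add_le_add key1 key2
    _ = ((2 * cF) * (2 + c * E) +
        (2 * (1 + cF * ‖Φ‖) * (‖Lt‖ + 1) * CA) * (1 + c * E / 2) ^ 2 / (c * s)) * ε := by
      ring
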